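/- Let V be a full-dimensional closed convex polyhedral cone in ℝ^n with vertex 0 and let P be a linear subspace of dimension j such that the orthogonal projection π_P maps V onto a convex polyhedral cone π_P(V) ⊂ P, generically. For a k-face F of V with k < j, the image π_P(F) is a k-face of π_P(V) if and only if P ∩ C(F,V) ≠ {0}, and in that case the normal cone of π_P(V) at π_P(F) (computed inside P) equals P ∩ C(F,V). -/

import Mathlib

open MeasureTheory Metric Set

/-- `ballVol i` is `α_i`, the volume of the unit ball in `ℝ^i` (`α_0 = 1`). -/
noncomputable def ballVol (i : ℕ) : ℝ :=
  (volume (Metric.closedBall (0 : EuclideanSpace ℝ (Fin i)) 1)).toReal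

/-- `dens d S` is the `d`-dimensional density at the origin of a cone `S` with vertex `0`,
namely `H^d(S ∩ B(0,1)) / α_d` (with the convention `Θ_0({0}) = 1`, automatic here). -/
noncomputable def dens {n : ℕ} (d : ℕ) (S : Set (EuclideanSpace ℝ (Fin n))) : ℝ :=
  (μH[(d : ℝ)] (S ∩ Metric.closedBall 0 1)).toReal / ballVol d

/-- The closed convex polyhedral cone with vertex `0` determined by the outward
normals `u i`. -/
def coneOf {n m : ℕ} (u : Fin m → EuclideanSpace ℝ (Fin n)) :
    Set (EuclideanSpace ℝ (Fin n)) :=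
  {x | ∀ i, inner ℝ (u i) x ≤ (0 : ℝ)}

/-- The face of the polyhedral cone `coneOf u` cut out by the bounding hyperplanes
indexed by `s`. -/
def faceOf {n m : ℕ} (u : Fin m → EuclideanSpace ℝ (Fin n)) (s : Finset (Fin m)) :
    Set (EuclideanSpace ℝ (Fin n)) :=
  {x | (∀ i, inner ℝ (u i) x ≤ (0 : ℝ)) ∧ ∀ i ∈ s, inner ℝ (u i) x = (0 : ℝ)}

/-- The normal (conormal) cone `C(F,V)` of the cone `V` along its face `F`:
vectors nonpositive on `V` and vanishing on `F`. -/
def normalCone {n : ℕ} (V F : Set (EuclideanSpace ℝ (Fin n))) :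
    Set (EuclideanSpace ℝ (Fin n)) :=
  {w | (∀ x ∈ V, inner ℝ w x ≤ (0 : ℝ)) ∧ ∀ x ∈ F, inner ℝ w x = (0 : ℝ)}

/-- The (linear) dimension of a cone: the rank of its linear span. -/
noncomputable def sdim {n : ℕ} (S : Set (EuclideanSpace ℝ (Fin n))) : ℕ :=
  Module.finrank ℝ (Submodule.span ℝ S)



section Aux

open scoped RealInnerProductSpace
open Finset


open scoped RealInnerProductSpace
open Finset

variable {E : Type*} [NormedAddCommGroup E] [InnerProductSpace ℝ E] [FiniteDimensional ℝ E]
variable {ι : Type*} [Fintype ι]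

/-- The finitely generated cone on `u`. -/
def coneGenSet (u : ι → E) : Set E :=
  {x | ∃ lam : ι → ℝ, (∀ i, 0 ≤ lam i) ∧ x = ∑ i, lam i • u i}

lemma coneGen_convex (u : ι → E) : Convex ℝ (coneGenSet u) := by
  rintro x ⟨lx, hlx, rfl⟩ y ⟨ly, hly, rfl⟩ a b ha hb _
  refine ⟨fun i => a * lx i + b * ly i,
    fun i => add_nonneg (mul_nonneg ha (hlx i)) (mul_nonneg hb (hly i)), ?_⟩
  rw [Finset.smul_sum, Finset.smul_sum, ← Finset.sum_add_distrib]
  refine Finset.sum_congr rfl fun i _ => ?_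
  simp [add_smul, mul_smul]

lemma mem_coneGen (u : ι → E) (i : ι) : u i ∈ coneGenSet u := by
  classical
  refine ⟨fun j => if j = i then 1 else 0, fun j => by positivity, ?_⟩
  simp [ite_smul]

lemma zero_mem_coneGen (u : ι → E) : (0 : E) ∈ coneGenSet u :=
  ⟨fun _ => 0, fun _ => le_rfl, by simp⟩

lemma coneGen_smul (u : ι → E) {x : E} (hx : x ∈ coneGenSet u) {t : ℝ} (ht : 0 ≤ t) :
    t • x ∈ coneGenSet u := by
  obtain ⟨l, hl, rfl⟩ := hx
  exact ⟨fun i => t * l i, fun i => mul_nonneg ht (hl i), by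
    rw [Finset.smul_sum]; exact Finset.sum_congr rfl fun i _ => (smul_smul t (l i) (u i))⟩

lemma caratheodory_cone (u : ι → E) (t : Finset ι) :
    ∀ lam : ι → ℝ, (∀ i, 0 ≤ lam i) → (∀ i ∉ t, lam i = 0) →
    ∃ t' : Finset ι, LinearIndependent ℝ (fun i : ↥t' => u ↑i) ∧
      ∃ lam' : ι → ℝ, (∀ i, 0 ≤ lam' i) ∧ (∀ i ∉ t', lam' i = 0) ∧
        ∑ i, lam' i • u i = ∑ i, lam i • u i := by
  classical
  induction t using Finset.strongInductionOn with
  | _ t IH =>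
  intro lam hlam hsupp
  by_cases hind : LinearIndependent ℝ (fun i : ↥t => u ↑i)
  · exact ⟨t, hind, lam, hlam, hsupp, rfl⟩
  · obtain ⟨g, hg0, i, hgi⟩ := Fintype.not_linearIndependent_iff.mp hind
    set c : ι → ℝ := fun i => if h : i ∈ t then g ⟨i, h⟩ else 0 with hc
    have hct : ∀ i ∉ t, c i = 0 := fun i hi => by simp [hc, hi]
    have hcsum : ∑ i, c i • u i = 0 := by
      rw [← Finset.sum_subset t.subset_univ (fun i _ hi => by simp [hct i hi])]
      rw [← Finset.sum_attach t (fun i => c i • u i)]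
      rw [← hg0]
      exact Finset.sum_congr rfl fun i _ => by simp [hc, i.2]
    have hcne : ∃ d : ι → ℝ, (∀ i ∉ t, d i = 0) ∧ (∑ i, d i • u i = 0) ∧ ∃ i, 0 < d i := by
      rcases lt_trichotomy (c i) 0 with h | h | h
      · exact ⟨-c, fun i hi => by simp [hct i hi], by
          simpa [neg_smul] using congrArg Neg.neg hcsum, i, by simpa using h⟩
      · exact absurd (by simpa [hc, i.2] using h) hgi
      · exact ⟨c, hct, hcsum, i, h⟩
    obtain ⟨d, hdt, hdsum, i₁, hd1⟩ := hcne
    have hi₁t : i₁ ∈ t := by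
      by_contra hmem; rw [hdt i₁ hmem] at hd1; exact lt_irrefl 0 hd1
    set tp := t.filter (fun i => 0 < d i) with htp
    obtain ⟨i₀, hi₀mem, hi₀min⟩ :=
      tp.exists_min_image (fun i => lam i / d i) ⟨i₁, by simp [htp, hi₁t, hd1]⟩
    have hi₀t : i₀ ∈ t := (Finset.mem_filter.mp hi₀mem).1
    have hdi₀ : 0 < d i₀ := (Finset.mem_filter.mp hi₀mem).2
    set τ := lam i₀ / d i₀ with hτ
    have hτ0 : 0 ≤ τ := div_nonneg (hlam i₀) hdi₀.le
    set lam' : ι → ℝ := fun i => lam i - τ * d i with hlam'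
    have h1 : ∀ i, 0 ≤ lam' i := by
      intro i
      by_cases hd : 0 < d i
      · have hit : i ∈ t := by
          by_contra hmem; rw [hdt i hmem] at hd; exact lt_irrefl 0 hd
        have := hi₀min i (Finset.mem_filter.mpr ⟨hit, hd⟩)
        have := (le_div_iff₀ hd).mp this
        simp only [hlam']; linarith
      · push_neg at hd
        have : τ * d i ≤ 0 := mul_nonpos_of_nonneg_of_nonpos hτ0 hd
        have := hlam i
        simp only [hlam']; linarith
    have h2 : ∀ i ∉ t.erase i₀, lam' i = 0 := by
      intro i hi
      rw [Finset.mem_erase] at hi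
      push_neg at hi
      by_cases hit : i ∈ t
      · have hii : i = i₀ := by
          by_contra hne; exact (hi hne) hit
        subst hii
        have : lam' i = lam i - lam i / d i * d i := rfl
        rw [this, div_mul_cancel₀ _ (ne_of_gt hdi₀), sub_self]
      · simp [hlam', hsupp i hit, hdt i hit]
    have h3 : ∑ i, lam' i • u i = ∑ i, lam i • u i := by
      simp only [hlam', sub_smul, mul_smul, Finset.sum_sub_distrib]
      rw [← Finset.smul_sum, hdsum, smul_zero, sub_zero]
    obtain ⟨t', hind', lam'', h4, h5, h6⟩ :=
      IH (t.erase i₀) (Finset.erase_ssubset hi₀t) lam' h1 h2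
    exact ⟨t', hind', lam'', h4, h5, h6.trans h3⟩

lemma isClosed_coneGen (u : ι → E) : IsClosed (coneGenSet u) := by
  classical
  have : coneGenSet u = ⋃ t ∈ {t : Finset ι | LinearIndependent ℝ (fun i : ↥t => u ↑i)},
      (Fintype.linearCombination ℝ (fun i : ↥t => u ↑i)) '' {g | ∀ i, 0 ≤ g i} := by
    ext x
    simp only [Set.mem_iUnion, Set.mem_image, Set.mem_setOf_eq]
    constructor
    · rintro ⟨lam, hlam, rfl⟩
      obtain ⟨t', hind, lam', h4, h5, h6⟩ :=
        caratheodory_cone u Finset.univ lam hlam (fun i hi => absurd (Finset.mem_univ i) hi)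
      refine ⟨t', hind, fun i => lam' ↑i, fun i => h4 ↑i, ?_⟩
      have e1 : ∑ i : ↥t', lam' ↑i • u ↑i = ∑ i ∈ t', lam' i • u i :=
        Finset.sum_coe_sort t' (fun i => lam' i • u i)
      have e2 : ∑ i ∈ t', lam' i • u i = ∑ i : ι, lam' i • u i :=
        Finset.sum_subset t'.subset_univ (fun i _ hi => by rw [h5 i hi, zero_smul])
      rw [Fintype.linearCombination_apply]
      exact e1.trans (e2.trans h6)
    · rintro ⟨t, _, g, hg, rfl⟩
      refine ⟨fun i => if h : i ∈ t then g ⟨i, h⟩ else 0,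
        fun i => by by_cases h : i ∈ t <;> simp [h, hg _], ?_⟩
      rw [Fintype.linearCombination_apply]
      have e1 : ∑ i : ↥t, g i • u ↑i
          = ∑ i : ↥t, (if h : (i:ι) ∈ t then g ⟨i, h⟩ else 0) • u ↑i :=
        Finset.sum_congr rfl (fun i _ => by rw [dif_pos i.2])
      have e2 : ∑ i : ↥t, (if h : (i:ι) ∈ t then g ⟨i, h⟩ else 0) • u ↑i
          = ∑ i ∈ t, (if h : i ∈ t then g ⟨i, h⟩ else 0) • u i :=
        Finset.sum_coe_sort t (fun j => (if h : j ∈ t then g ⟨j, h⟩ else 0) • u j)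
      have e3 : ∑ i ∈ t, (if h : i ∈ t then g ⟨i, h⟩ else 0) • u i
          = ∑ i : ι, (if h : i ∈ t then g ⟨i, h⟩ else 0) • u i :=
        Finset.sum_subset t.subset_univ (fun i _ hi => by simp [hi])
      exact e1.trans (e2.trans e3)
  rw [this]
  refine Set.Finite.isClosed_biUnion (Set.toFinite _) (fun t ht => ?_)
  have hker : LinearMap.ker (Fintype.linearCombination ℝ (fun i : ↥t => u ↑i)) = ⊥ := by
    rw [LinearMap.ker_eq_bot']
    intro g hg
    rw [Fintype.linearCombination_apply] at hg
    exact funext (Fintype.linearIndependent_iff.mp ht g hg)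
  have hemb := LinearMap.isClosedEmbedding_of_injective hker
  refine hemb.isClosedMap _ ?_
  have : {g : ↥t → ℝ | ∀ i, 0 ≤ g i} = ⋂ i : ↥t, {g : ↥t → ℝ | 0 ≤ g i} := by
    ext g; simp [Set.mem_iInter]
  rw [this]
  exact isClosed_iInter fun i => isClosed_le continuous_const (continuous_apply i)

theorem farkas_lemma (u : ι → E) (w : E)
    (hw : ∀ x : E, (∀ i, ⟪u i, x⟫ ≤ 0) → ⟪w, x⟫ ≤ 0) :
    ∃ lam : ι → ℝ, (∀ i, 0 ≤ lam i) ∧ w = ∑ i, lam i • u i := by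
  by_contra hcon
  have hw' : w ∉ coneGenSet u := fun ⟨l, h1, h2⟩ => hcon ⟨l, h1, h2⟩
  obtain ⟨f, b, hfb, hbw⟩ :=
    geometric_hahn_banach_closed_point (coneGen_convex u) (isClosed_coneGen u) hw'
  have hb0 : 0 < b := by simpa using hfb 0 (zero_mem_coneGen u)
  have hfK : ∀ y ∈ coneGenSet u, f y ≤ 0 := by
    intro y hy
    by_contra hpos
    push_neg at hpos
    have ht : (0:ℝ) ≤ (b + 1) / f y := div_nonneg (by linarith) hpos.le
    have := hfb _ (coneGen_smul u hy ht)
    rw [_root_.map_smul, smul_eq_mul, div_mul_cancel₀ _ (ne_of_gt hpos)] at this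
    linarith
  set x := (InnerProductSpace.toDual ℝ E).symm f with hx
  have hxf : ∀ y : E, ⟪x, y⟫ = f y := fun y => InnerProductSpace.toDual_symm_apply
  have hux : ∀ i, ⟪u i, x⟫ ≤ 0 := fun i => by
    rw [real_inner_comm, hxf]; exact hfK _ (mem_coneGen u i)
  have h1 : ⟪w, x⟫ ≤ 0 := hw x hux
  rw [real_inner_comm, hxf] at h1
  linarith

/-- Nonneg combinations are nonpositive on the cone. -/
lemma inner_sum_nonpos (u : ι → E) (lam : ι → ℝ) (hlam : ∀ i, 0 ≤ lam i) (x : E)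
    (hx : ∀ i, ⟪u i, x⟫ ≤ 0) : ⟪∑ i, lam i • u i, x⟫ ≤ 0 := by
  rw [sum_inner]
  refine Finset.sum_nonpos fun i _ => ?_
  rw [real_inner_smul_left]
  exact mul_nonpos_of_nonneg_of_nonpos (hlam i) (hx i)

lemma convex_subset_submodule_of_cover {A : Set E} (hA : Convex ℝ A) (hne : A.Nonempty)
    {κ : Type*} (T : Finset κ) (S : κ → Submodule ℝ E)
    (hcov : A ⊆ ⋃ t ∈ T, (S t : Set E)) : ∃ t ∈ T, A ⊆ (S t : Set E) := by
  classical
  induction T using Finset.induction_on with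
  | empty =>
    obtain ⟨p, hp⟩ := hne
    simpa using hcov hp
  | @insert a T ha IH =>
    by_cases hsub : A ⊆ ⋃ t ∈ T, (S t : Set E)
    · obtain ⟨t, ht, hAt⟩ := IH hsub
      exact ⟨t, Finset.mem_insert_of_mem ht, hAt⟩
    · rw [Set.not_subset] at hsub
      obtain ⟨p, hpA, hpT⟩ := hsub
      have hpa : p ∈ S a := by
        have := hcov hpA
        simp only [Set.mem_iUnion, SetLike.mem_coe, exists_prop] at this hpT
        obtain ⟨t, ht, hpt⟩ := this
        rcases Finset.mem_insert.mp ht with rfl | ht'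
        · exact hpt
        · exact absurd ⟨t, ht', hpt⟩ hpT
      refine ⟨a, Finset.mem_insert_self a T, fun q hqA => ?_⟩
      by_cases hpq : p = q
      · exact hpq ▸ hpa
      set N : ℕ := T.card + 2 with hN
      have hNpos : (0:ℝ) < N := by positivity
      set r : ℕ → ℝ := fun c => ((c:ℝ) + 1) / N with hr
      set xc : ℕ → E := fun c => p + r c • (q - p) with hxc
      have hxcA : ∀ c ∈ Finset.range N, xc c ∈ A := by
        intro c hc
        have hc' : (c:ℝ) + 1 ≤ N := by
          rw [Finset.mem_range] at hc
          exact_mod_cast Nat.succ_le_of_lt hc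
        have hr1 : r c ≤ 1 := by rw [hr]; exact (div_le_one hNpos).mpr hc'
        have hr0 : 0 ≤ r c := by positivity
        have : xc c = (1 - r c) • p + r c • q := by
          simp only [hxc]; simp only [smul_sub, sub_smul, one_smul]; abel
        rw [this]
        exact hA hpA hqA (by linarith) hr0 (by ring)
      have hchoice : ∀ c, xc c ∈ A → ∃ t ∈ insert a T, xc c ∈ S t := by
        intro c hc
        have := hcov hc
        simp only [Set.mem_iUnion, SetLike.mem_coe, exists_prop] at this
        exact this
      set φ : ℕ → κ := fun c => if h : xc c ∈ A then (hchoice c h).choose else a with hφ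
      have hφmem : ∀ c ∈ Finset.range N, φ c ∈ insert a T := by
        intro c hc
        simp only [hφ]; rw [dif_pos (hxcA c hc)]
        exact (hchoice c (hxcA c hc)).choose_spec.1
      have hφx : ∀ c ∈ Finset.range N, xc c ∈ S (φ c) := by
        intro c hc
        simp only [hφ]; rw [dif_pos (hxcA c hc)]
        exact (hchoice c (hxcA c hc)).choose_spec.2
      obtain ⟨c, hc, c', hc', hcc', hφeq⟩ :=
        Finset.exists_ne_map_eq_of_card_lt_of_maps_to
          (by rw [hN]; calc (insert a T).card ≤ T.card + 1 := Finset.card_insert_le a T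
            _ < (Finset.range (T.card + 2)).card := by rw [Finset.card_range]; omega) hφmem
      set t₀ := φ c with ht₀
      have h1 : xc c ∈ S t₀ := hφx c hc
      have h2 : xc c' ∈ S t₀ := hφeq ▸ hφx c' hc'
      have hrne : r c - r c' ≠ 0 := by
        rw [hr]; simp only [div_sub_div_same]
        refine div_ne_zero ?_ (ne_of_gt hNpos)
        intro h
        apply hcc'
        have : (c:ℝ) = c' := by linarith [sub_eq_zero.mp h]
        exact_mod_cast this
      have hqp : q - p ∈ S t₀ := by
        have hd : xc c - xc c' ∈ S t₀ := Submodule.sub_mem _ h1 h2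
        have : xc c - xc c' = (r c - r c') • (q - p) := by
          simp only [hxc]; simp only [sub_smul]; abel
        rw [this] at hd
        have := Submodule.smul_mem _ (r c - r c')⁻¹ hd
        rwa [inv_smul_smul₀ hrne] at this
      have hpS : p ∈ S t₀ := by
        have : p = xc c - r c • (q - p) := by simp only [hxc]; abel
        rw [this]
        exact Submodule.sub_mem _ h1 (Submodule.smul_mem _ _ hqp)
      have ht₀a : t₀ = a := by
        have ht₀mem := hφmem c hc
        rcases Finset.mem_insert.mp ht₀mem with h | h
        · exact h
        · exfalso
          apply hpT
          simp only [Set.mem_iUnion, SetLike.mem_coe, exists_prop]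
          exact ⟨t₀, h, hpS⟩
      have : q = p + (q - p) := by abel
      rw [this]
      exact Submodule.add_mem _ (ht₀a ▸ hpS) (ht₀a ▸ hqp)

namespace Stmt10

variable {n m : ℕ}

local notation "E" => EuclideanSpace ℝ (Fin n)

lemma mem_coneOf {u : Fin m → E} {x : E} : x ∈ coneOf u ↔ ∀ i, ⟪u i, x⟫ ≤ 0 := Iff.rfl

lemma mem_faceOf {u : Fin m → E} {s : Finset (Fin m)} {x : E} :
    x ∈ faceOf u s ↔ (∀ i, ⟪u i, x⟫ ≤ 0) ∧ ∀ i ∈ s, ⟪u i, x⟫ = 0 := Iff.rfl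

lemma mem_normalCone {V F : Set E} {w : E} :
    w ∈ normalCone V F ↔ (∀ x ∈ V, ⟪w, x⟫ ≤ 0) ∧ ∀ x ∈ F, ⟪w, x⟫ = 0 := Iff.rfl

lemma faceOf_subset {u : Fin m → E} {s : Finset (Fin m)} : faceOf u s ⊆ coneOf u :=
  fun _ hx => hx.1

lemma zero_mem_faceOf {u : Fin m → E} {s : Finset (Fin m)} : (0 : E) ∈ faceOf u s :=
  ⟨fun i => by simp, fun i _ => by simp⟩

lemma faceOf_add {u : Fin m → E} {s : Finset (Fin m)} {x y : E}
    (hx : x ∈ faceOf u s) (hy : y ∈ faceOf u s) : x + y ∈ faceOf u s := by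
  refine ⟨fun i => ?_, fun i hi => ?_⟩
  · rw [inner_add_right]; exact add_nonpos (hx.1 i) (hy.1 i)
  · rw [inner_add_right, hx.2 i hi, hy.2 i hi, add_zero]

lemma normalCone_convex (V F : Set E) : Convex ℝ (normalCone V F) := by
  rintro w ⟨hw1, hw2⟩ w' ⟨hw'1, hw'2⟩ a b ha hb _
  constructor
  · intro x hx
    rw [inner_add_left, real_inner_smul_left, real_inner_smul_left]
    exact add_nonpos (mul_nonpos_of_nonneg_of_nonpos ha (hw1 x hx))
      (mul_nonpos_of_nonneg_of_nonpos hb (hw'1 x hx))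
  · intro x hx
    rw [inner_add_left, real_inner_smul_left, real_inner_smul_left, hw2 x hx, hw'2 x hx]
    ring

lemma zero_mem_normalCone (V F : Set E) : (0 : E) ∈ normalCone V F :=
  ⟨fun x _ => by simp, fun x _ => by simp⟩

/-- Lemma A: a functional nonpositive on the cone vanishing at an interior-ish point `p`
vanishes on the face determined by the active constraints at `p`. -/
lemma lemA {u : Fin m → E} {w p : E}
    (hw : ∀ x ∈ coneOf u, ⟪w, x⟫ ≤ 0) (hp : p ∈ coneOf u) (hwp : ⟪w, p⟫ = 0)
    {y : E} (hy : y ∈ faceOf u (Finset.univ.filter fun i => ⟪u i, p⟫ = 0)) :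
    ⟪w, y⟫ = 0 := by
  classical
  set t := Finset.univ.filter (fun i => ⟪u i, p⟫ = 0) with ht
  have hyV : y ∈ coneOf u := faceOf_subset hy
  have key : ∃ ε : ℝ, 0 < ε ∧ p - ε • y ∈ coneOf u := by
    set B := Finset.univ.filter (fun i => ⟪u i, y⟫ < 0) with hB
    have hBp : ∀ i ∈ B, ⟪u i, p⟫ < 0 := by
      intro i hi
      rw [hB, Finset.mem_filter] at hi
      have hit : i ∉ t := by
        intro hmem
        rw [ht, Finset.mem_filter] at hmem
        have := hy.2 i (by rw [ht, Finset.mem_filter]; exact ⟨Finset.mem_univ i, hmem.2⟩)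
        exact absurd this (ne_of_lt hi.2)
      rw [ht, Finset.mem_filter] at hit
      push_neg at hit
      exact lt_of_le_of_ne (hp i) (hit (Finset.mem_univ i))
    rcases B.eq_empty_or_nonempty with hBe | hBne
    · refine ⟨1, one_pos, fun i => ?_⟩
      have hiy : ⟪u i, y⟫ = 0 := by
        by_contra hne
        have : i ∈ B := by
          rw [hB, Finset.mem_filter]
          exact ⟨Finset.mem_univ i, lt_of_le_of_ne (hyV i) hne⟩
        rw [hBe] at this; exact absurd this (Finset.notMem_empty i)
      rw [inner_sub_right, real_inner_smul_right, hiy]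
      simpa using hp i
    · obtain ⟨i₀, hi₀B, hi₀min⟩ := B.exists_min_image (fun i => ⟪u i, p⟫ / ⟪u i, y⟫) hBne
      have hy₀ : ⟪u i₀, y⟫ < 0 := (Finset.mem_filter.mp hi₀B).2
      have hp₀ : ⟪u i₀, p⟫ < 0 := hBp i₀ hi₀B
      refine ⟨⟪u i₀, p⟫ / ⟪u i₀, y⟫, div_pos_of_neg_of_neg hp₀ hy₀, fun i => ?_⟩
      rw [inner_sub_right, real_inner_smul_right]
      by_cases hiB : i ∈ B
      · have h1 := hi₀min i hiB
        have hyi : ⟪u i, y⟫ < 0 := (Finset.mem_filter.mp hiB).2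
        rw [le_div_iff_of_neg hyi] at h1
        linarith
      · have hiy : ⟪u i, y⟫ = 0 := by
          by_contra hne
          exact hiB (Finset.mem_filter.mpr ⟨Finset.mem_univ i,
            lt_of_le_of_ne (hyV i) hne⟩)
        rw [hiy, mul_zero, sub_zero]
        exact hp i
  obtain ⟨ε, hε, hεV⟩ := key
  have h1 : ⟪w, p - ε • y⟫ ≤ 0 := hw _ hεV
  rw [inner_sub_right, real_inner_smul_right, hwp, zero_sub, neg_nonpos] at h1
  have h2 : ⟪w, y⟫ ≤ 0 := hw _ hyV
  nlinarith



lemma farkasFace (u : Fin m → E) (t : Finset (Fin m)) (z : E)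
    (hz : ∀ x ∈ faceOf u t, ⟪z, x⟫ ≤ 0) :
    ∃ a b : Fin m → ℝ, (∀ i, 0 ≤ a i) ∧ (∀ i ∉ t, b i = 0) ∧
      z = ∑ i, (a i - b i) • u i := by
  classical
  set v : Fin m ⊕ Fin m → EuclideanSpace ℝ (Fin n) :=
    Sum.elim u (fun i => if i ∈ t then -u i else u i) with hv
  have hset : ∀ x : EuclideanSpace ℝ (Fin n), (∀ i, ⟪v i, x⟫ ≤ 0) ↔ x ∈ faceOf u t := by
    intro x
    constructor
    · intro h
      refine ⟨fun i => h (Sum.inl i), fun i hi => ?_⟩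
      have h2 := h (Sum.inr i)
      simp only [hv, Sum.elim_inr, if_pos hi, inner_neg_left] at h2
      have h1 := h (Sum.inl i)
      simp only [hv, Sum.elim_inl] at h1
      have : (0:ℝ) ≤ ⟪u i, x⟫ := by linarith
      linarith [le_antisymm h1 this]
    · intro hx i
      rcases i with i | i
      · exact hx.1 i
      · simp only [hv, Sum.elim_inr]
        by_cases hi : i ∈ t
        · rw [if_pos hi, inner_neg_left, hx.2 i hi, neg_zero]
        · rw [if_neg hi]; exact hx.1 i
  obtain ⟨lam, hlam, hzsum⟩ := farkas_lemma v z (fun x hx => hz x ((hset x).mp hx))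
  refine ⟨fun i => lam (Sum.inl i) + (if i ∈ t then 0 else lam (Sum.inr i)),
    fun i => if i ∈ t then lam (Sum.inr i) else 0, ?_, ?_, ?_⟩
  · intro i
    by_cases hi : i ∈ t
    · simpa [hi] using hlam (Sum.inl i)
    · simp only [hi, if_false]
      exact add_nonneg (hlam _) (hlam _)
  · intro i hi; simp [hi]
  · rw [hzsum, Fintype.sum_sum_type, ← Finset.sum_add_distrib]
    refine Finset.sum_congr rfl fun i _ => ?_
    by_cases hi : i ∈ t
    · simp only [hv, Sum.elim_inl, Sum.elim_inr, if_pos hi, add_zero, smul_neg]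
      rw [sub_smul]
      abel
    · simp only [hv, Sum.elim_inl, Sum.elim_inr, if_neg hi, sub_zero]
      rw [add_smul]
  
/-- A relative interior point of the face. -/
lemma exists_relint (u : Fin m → E) (s : Finset (Fin m)) :
    ∃ f₀ ∈ faceOf u s, ∀ i, (∀ y ∈ faceOf u s, ⟪u i, y⟫ = 0) ∨ ⟪u i, f₀⟫ < 0 := by
  classical
  set F := faceOf u s with hF
  set g : Fin m → EuclideanSpace ℝ (Fin n) :=
    fun i => if h : ∃ y ∈ F, ⟪u i, y⟫ ≠ 0 then h.choose else 0 with hg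
  have hgF : ∀ i, g i ∈ F := by
    intro i
    simp only [hg]
    split_ifs with h
    · exact h.choose_spec.1
    · exact zero_mem_faceOf
  refine ⟨∑ i, g i, ?_, ?_⟩
  · exact Finset.sum_induction g (· ∈ F) (fun a b ha hb => faceOf_add ha hb)
      zero_mem_faceOf (fun i _ => hgF i)
  · intro i
    by_cases hZ : ∀ y ∈ F, ⟪u i, y⟫ = 0
    · exact Or.inl hZ
    · right
      push_neg at hZ
      have hgi : ⟪u i, g i⟫ < 0 := by
        simp only [hg]
        rw [dif_pos hZ]
        exact lt_of_le_of_ne (hZ.choose_spec.1.1 i) hZ.choose_spec.2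
      have hterms : ∀ j, ⟪u i, g j⟫ ≤ 0 := fun j => (hgF j).1 i
      rw [inner_sum]
      calc ∑ j, ⟪u i, g j⟫
          = ⟪u i, g i⟫ + ∑ j ∈ Finset.univ.erase i, ⟪u i, g j⟫ :=
            (Finset.add_sum_erase _ _ (Finset.mem_univ i)).symm
        _ ≤ ⟪u i, g i⟫ + 0 := by
            have := Finset.sum_nonpos (s := Finset.univ.erase i)
              (f := fun j => ⟪u i, g j⟫) (fun j _ => hterms j)
            linarith
        _ < 0 := by linarith

lemma span_faceOf_eq (u : Fin m → E) (s : Finset (Fin m)) :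
    Submodule.span ℝ (faceOf u s)
      = (Submodule.span ℝ (u '' {i | ∀ y ∈ faceOf u s, ⟪u i, y⟫ = 0}))ᗮ := by
  classical
  set F := faceOf u s with hF
  set Z := {i : Fin m | ∀ y ∈ F, ⟪u i, y⟫ = 0} with hZ
  set U := Submodule.span ℝ (u '' Z) with hU
  apply le_antisymm
  · rw [Submodule.span_le]
    intro y hy
    rw [SetLike.mem_coe, Submodule.mem_orthogonal]
    intro x hx
    have hle : U ≤ LinearMap.ker (innerSL ℝ y).toLinearMap := by
      rw [Submodule.span_le]
      rintro _ ⟨i, hi, rfl⟩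
      rw [SetLike.mem_coe, LinearMap.mem_ker]
      exact (real_inner_comm _ _).trans (hi y hy)
    exact (real_inner_comm x y) ▸ (hle hx : ⟪y, x⟫ = 0)
  · intro x hx
    have hux : ∀ i ∈ Z, ⟪u i, x⟫ = 0 := fun i hi =>
      (Submodule.mem_orthogonal U x).mp hx (u i) (Submodule.subset_span ⟨i, hi, rfl⟩)
    obtain ⟨f₀, hf₀F, hf₀⟩ := exists_relint u s
    have hsZ : ∀ i ∈ s, i ∈ Z := fun i hi => fun y hy => hy.2 i hi
    have key : ∃ ε : ℝ, 0 < ε ∧ f₀ + ε • x ∈ F := by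
      set B := Finset.univ.filter (fun i => 0 < ⟪u i, x⟫) with hB
      have hBf₀ : ∀ i ∈ B, ⟪u i, f₀⟫ < 0 := by
        intro i hi
        rcases hf₀ i with h | h
        · exfalso
          have : i ∈ Z := h
          have := hux i this
          rw [hB, Finset.mem_filter] at hi
          linarith [hi.2]
        · exact h
      have main : ∀ ε : ℝ, 0 < ε → (∀ i ∈ B, ε * ⟪u i, x⟫ ≤ -⟪u i, f₀⟫) →
          f₀ + ε • x ∈ F := by
        intro ε hε hεB
        have h1 : ∀ i, ⟪u i, f₀ + ε • x⟫ ≤ 0 := by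
          intro i
          rw [inner_add_right, real_inner_smul_right]
          by_cases hiB : i ∈ B
          · linarith [hεB i hiB]
          · have hx0 : ⟪u i, x⟫ ≤ 0 := by
              by_contra hc
              exact hiB (Finset.mem_filter.mpr ⟨Finset.mem_univ i, by linarith⟩)
            have := hf₀F.1 i
            nlinarith
        refine ⟨h1, fun i hi => ?_⟩
        rw [inner_add_right, real_inner_smul_right, hux i (hsZ i hi),
          hsZ i hi f₀ hf₀F, mul_zero, add_zero]
      rcases B.eq_empty_or_nonempty with hBe | hBne
      · exact ⟨1, one_pos, main 1 one_pos (fun i hi => by rw [hBe] at hi; exact absurd hi (Finset.notMem_empty i))⟩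
      · obtain ⟨i₀, hi₀B, hi₀min⟩ :=
          B.exists_min_image (fun i => -⟪u i, f₀⟫ / ⟪u i, x⟫) hBne
        have hx₀ : 0 < ⟪u i₀, x⟫ := (Finset.mem_filter.mp hi₀B).2
        have hf₀i₀ : ⟪u i₀, f₀⟫ < 0 := hBf₀ i₀ hi₀B
        have hε₀ : 0 < -⟪u i₀, f₀⟫ / ⟪u i₀, x⟫ := div_pos (by linarith) hx₀
        refine ⟨_, hε₀, main _ hε₀ ?_⟩
        intro i hi
        have hxi : 0 < ⟪u i, x⟫ := (Finset.mem_filter.mp hi).2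
        have h2 := hi₀min i hi
        rw [div_le_div_iff₀ hx₀ hxi] at h2
        calc -⟪u i₀, f₀⟫ / ⟪u i₀, x⟫ * ⟪u i, x⟫
            = -⟪u i₀, f₀⟫ * ⟪u i, x⟫ / ⟪u i₀, x⟫ := by ring
          _ ≤ -⟪u i, f₀⟫ := by
              rw [div_le_iff₀ hx₀]
              linarith
    obtain ⟨ε, hε, hmem⟩ := key
    have h1 : f₀ + ε • x ∈ Submodule.span ℝ F := Submodule.subset_span hmem
    have h2 : f₀ ∈ Submodule.span ℝ F := Submodule.subset_span hf₀F
    have h3 : ε • x ∈ Submodule.span ℝ F := by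
      have := Submodule.sub_mem _ h1 h2
      simpa using this
    have := Submodule.smul_mem _ ε⁻¹ h3
    rwa [inv_smul_smul₀ (ne_of_gt hε)] at this

lemma span_normalCone_eq (u : Fin m → E) (s : Finset (Fin m)) :
    Submodule.span ℝ (normalCone (coneOf u) (faceOf u s))
      = Submodule.span ℝ (u '' {i | ∀ y ∈ faceOf u s, ⟪u i, y⟫ = 0}) := by
  classical
  set F := faceOf u s with hF
  set Z := {i : Fin m | ∀ y ∈ F, ⟪u i, y⟫ = 0} with hZ
  set U := Submodule.span ℝ (u '' Z) with hU
  apply le_antisymm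
  · have hW : U = (Submodule.span ℝ F)ᗮ := by
      rw [span_faceOf_eq u s, Submodule.orthogonal_orthogonal]
    rw [hW, Submodule.span_le]
    intro w hw
    rw [SetLike.mem_coe, Submodule.mem_orthogonal]
    intro x hx
    have hle : Submodule.span ℝ F ≤ LinearMap.ker (innerSL ℝ w).toLinearMap := by
      rw [Submodule.span_le]
      intro y hy
      rw [SetLike.mem_coe, LinearMap.mem_ker]
      exact hw.2 y hy
    exact (real_inner_comm x w) ▸ (hle hx : ⟪w, x⟫ = 0)
  · rw [Submodule.span_le]
    rintro _ ⟨i, hi, rfl⟩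
    exact Submodule.subset_span (⟨fun x hx => hx i, fun y hy => hi y hy⟩ :
      u i ∈ normalCone (coneOf u) F)

lemma finrank_map_of_disjoint (f : EuclideanSpace ℝ (Fin n) →ₗ[ℝ] EuclideanSpace ℝ (Fin n))
    (W : Submodule ℝ (EuclideanSpace ℝ (Fin n))) (h : W ⊓ LinearMap.ker f = ⊥) :
    Module.finrank ℝ (W.map f) = Module.finrank ℝ W := by
  have hker : LinearMap.ker (f.domRestrict W) = ⊥ := by
    rw [LinearMap.ker_eq_bot']
    intro x hx
    have hmem : (↑x : EuclideanSpace ℝ (Fin n)) ∈ W ⊓ LinearMap.ker f :=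
      ⟨x.2, by simpa [LinearMap.mem_ker] using hx⟩
    rw [h] at hmem
    exact Subtype.ext (by simpa using hmem)
  have hrk := LinearMap.finrank_range_add_finrank_ker (f.domRestrict W)
  rw [hker, finrank_bot, add_zero, LinearMap.range_domRestrict] at hrk
  exact hrk

end Stmt10

end Aux

open Stmt10 in
open scoped RealInnerProductSpace in
set_option maxHeartbeats 2000000 in
/-- let `V ⊆ ℝ^n` be a full-dimensional polyhedral cone with vertex `0`
and `P` a `j`-dimensional subspace transverse to all normal cones of `V` (generic
position). For a `k`-face `F` of `V` with `k < j`, the image `π_P(F)` is a `k`-face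
of `π_P(V)` iff `P ∩ C(F,V) ≠ {0}`, and in that case the normal cone of `π_P(V)`
along `π_P(F)` computed inside `P` equals `P ∩ C(F,V)`. -/
theorem stmt10 {n m : ℕ} (u : Fin m → EuclideanSpace ℝ (Fin n))
    (V : Set (EuclideanSpace ℝ (Fin n))) (hV : V = coneOf u)
    (hfull : Submodule.span ℝ V = ⊤)
    (j : ℕ) (P : Submodule ℝ (EuclideanSpace ℝ (Fin n)))
    (hPdim : Module.finrank ℝ P = j)
    (π : EuclideanSpace ℝ (Fin n) → EuclideanSpace ℝ (Fin n))
    (hπ : ∀ x, π x = (P.orthogonalProjectionOnto x : EuclideanSpace ℝ (Fin n)))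
    (hgen : ∀ s : Finset (Fin m),
      ((P : Set (EuclideanSpace ℝ (Fin n))) ∩ normalCone V (faceOf u s))
          = {(0 : EuclideanSpace ℝ (Fin n))} ∨
        Module.finrank ℝ (Submodule.span ℝ
            ((P : Set (EuclideanSpace ℝ (Fin n))) ∩ normalCone V (faceOf u s)))
          = j + Module.finrank ℝ (Submodule.span ℝ (normalCone V (faceOf u s))) - n)
    (s : Finset (Fin m)) (F : Set (EuclideanSpace ℝ (Fin n))) (hF : F = faceOf u s)
    (k : ℕ) (hk : sdim F = k) (hkj : k < j) :
    ((IsExposed ℝ (π '' V) (π '' F) ∧ sdim (π '' F) = k) ↔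
        (P : Set (EuclideanSpace ℝ (Fin n))) ∩ normalCone V F
          ≠ {(0 : EuclideanSpace ℝ (Fin n))})
    ∧ ((P : Set (EuclideanSpace ℝ (Fin n))) ∩ normalCone V F
          ≠ {(0 : EuclideanSpace ℝ (Fin n))} →
        (P : Set (EuclideanSpace ℝ (Fin n))) ∩ normalCone (π '' V) (π '' F)
          = (P : Set (EuclideanSpace ℝ (Fin n))) ∩ normalCone V F) := by
  classical
  subst hV
  subst hF
  have hπ' : π = fun x => (P.orthogonalProjectionOnto x : EuclideanSpace ℝ (Fin n)) := funext hπ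
  subst hπ'
  set πl : EuclideanSpace ℝ (Fin n) →ₗ[ℝ] EuclideanSpace ℝ (Fin n) :=
    P.subtype.comp P.orthogonalProjectionOnto.toLinearMap with hπl
  have hfun : (fun x : EuclideanSpace ℝ (Fin n) =>
      (P.orthogonalProjectionOnto x : EuclideanSpace ℝ (Fin n))) = ⇑πl := rfl
  rw [hfun]
  have hinner_proj : ∀ w ∈ P, ∀ x : EuclideanSpace ℝ (Fin n), ⟪w, πl x⟫ = ⟪w, x⟫ := by
    intro w hw x
    have h1 : ((P.orthogonalProjectionOnto w : EuclideanSpace ℝ (Fin n))) = w :=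
      Submodule.starProjection_eq_self_iff.mpr hw
    have : ⟪(P.orthogonalProjectionOnto w : EuclideanSpace ℝ (Fin n)), x⟫
        = ⟪w, (P.orthogonalProjectionOnto x : EuclideanSpace ℝ (Fin n))⟫ :=
      Submodule.inner_starProjection_left_eq_right P w x
    rw [h1] at this
    exact this.symm
  have hzeroV : (0 : EuclideanSpace ℝ (Fin n)) ∈ coneOf u := fun i => by simp
  -- the common dimension data
  have hnE : Module.finrank ℝ (EuclideanSpace ℝ (Fin n)) = n := finrank_euclideanSpace_fin
  set W : Submodule ℝ (EuclideanSpace ℝ (Fin n)) := Submodule.span ℝ (faceOf u s) with hWdef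
  have hk' : Module.finrank ℝ W = k := hk
  have hkn : k ≤ n := by
    have := Submodule.finrank_le W
    omega
  set Z := {i : Fin m | ∀ y ∈ faceOf u s, ⟪u i, y⟫ = 0} with hZdef
  set U : Submodule ℝ (EuclideanSpace ℝ (Fin n)) := Submodule.span ℝ (u '' Z) with hUdef
  have hWU : W = Uᗮ := span_faceOf_eq u s
  have hUW : U = Wᗮ := by rw [hWU, Submodule.orthogonal_orthogonal]
  have hNC : Submodule.span ℝ (normalCone (coneOf u) (faceOf u s)) = U := span_normalCone_eq u s
  have hWperp : Module.finrank ℝ Wᗮ = n - k := by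
    have := Submodule.finrank_add_finrank_orthogonal W
    rw [hk', hnE] at this
    omega
  have hcF : Module.finrank ℝ U = n - k := by rw [hUW]; exact hWperp
  -- membership of C in Wᗮ
  have hCWperp : ∀ w' ∈ normalCone (coneOf u) (faceOf u s), w' ∈ Wᗮ := by
    intro w' hw'
    rw [Submodule.mem_orthogonal]
    intro x hx
    have hle : W ≤ LinearMap.ker (innerSL ℝ w').toLinearMap := by
      rw [hWdef, Submodule.span_le]
      intro y hy
      rw [SetLike.mem_coe, LinearMap.mem_ker, ContinuousLinearMap.coe_coe, innerSL_apply_apply]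
      exact hw'.2 y hy
    have : ⟪w', x⟫ = 0 := hle hx
    rw [real_inner_comm]; exact this
  constructor
  · constructor
    · -- forward: exposed ∧ dim → P ∩ C ≠ {0}
      rintro ⟨hexp, hdim⟩ heq
      have hne : (⇑πl '' faceOf u s).Nonempty := ⟨πl 0, 0, zero_mem_faceOf, rfl⟩
      obtain ⟨l, hl⟩ := hexp hne
      set v := (InnerProductSpace.toDual ℝ (EuclideanSpace ℝ (Fin n))).symm l with hvdef
      have hv : ∀ y, ⟪v, y⟫ = l y := fun y => InnerProductSpace.toDual_symm_apply
      set w : EuclideanSpace ℝ (Fin n) := ↑(P.orthogonalProjectionOnto v) with hwdef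
      have hwP : w ∈ P := SetLike.coe_mem _
      have hwx : ∀ x : EuclideanSpace ℝ (Fin n), ⟪w, x⟫ = l (πl x) := by
        intro x
        rw [hwdef]
        exact (Submodule.inner_starProjection_left_eq_right P v x).trans (hv _)
      have h0mem : (0 : EuclideanSpace ℝ (Fin n)) ∈ ⇑πl '' faceOf u s :=
        ⟨0, zero_mem_faceOf, by simp⟩
      rw [hl] at h0mem
      obtain ⟨h0V, h0max⟩ := h0mem
      have hlneg : ∀ x ∈ coneOf u, l (πl x) ≤ 0 := by
        intro x hx
        have := h0max _ ⟨x, hx, rfl⟩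
        simpa using this
      have hlF : ∀ x ∈ faceOf u s, l (πl x) = 0 := by
        intro x hx
        have hmem : πl x ∈ ⇑πl '' faceOf u s := ⟨x, hx, rfl⟩
        rw [hl] at hmem
        have h1 := hmem.2 0 h0V
        have h2 := hlneg x (faceOf_subset hx)
        simp only [map_zero] at h1
        linarith
      have hwNC : w ∈ normalCone (coneOf u) (faceOf u s) :=
        ⟨fun x hx => (hwx x) ▸ hlneg x hx, fun x hx => (hwx x) ▸ hlF x hx⟩
      have hw0 : w ≠ 0 := by
        intro h0
        have hz : ∀ x ∈ coneOf u, l (πl x) = 0 := by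
          intro x hx
          rw [← hwx x, h0]
          exact inner_zero_left x
        have himg : ⇑πl '' faceOf u s = ⇑πl '' coneOf u := by
          rw [hl]
          ext y
          constructor
          · exact fun h => h.1
          · intro hy
            refine ⟨hy, ?_⟩
            rintro y' ⟨x', hx', rfl⟩
            obtain ⟨x, hx, rfl⟩ := hy
            rw [hz x' hx', hz x hx]
        have hVdim : Module.finrank ℝ (Submodule.span ℝ (⇑πl '' coneOf u)) = j := by
          rw [Submodule.span_image, hfull, Submodule.map_top]
          have hrange : LinearMap.range πl = P := by
            apply le_antisymm
            · rintro _ ⟨x, rfl⟩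
              exact SetLike.coe_mem (P.orthogonalProjectionOnto x)
            · intro p hp
              exact ⟨p, Submodule.starProjection_eq_self_iff.mpr hp⟩
          rw [hrange, hPdim]
        have : sdim (⇑πl '' faceOf u s) = j := by
          show Module.finrank ℝ (Submodule.span ℝ (⇑πl '' faceOf u s)) = j
          rw [himg]; exact hVdim
        rw [hdim] at this
        omega
      have : w ∈ ({0} : Set (EuclideanSpace ℝ (Fin n))) := heq ▸ ⟨hwP, hwNC⟩
      exact hw0 (by simpa using this)
    · -- backward
      intro hPC
      set C := normalCone (coneOf u) (faceOf u s) with hCdef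
      set A := (P : Set (EuclideanSpace ℝ (Fin n))) ∩ C with hAdef
      have hAconv : Convex ℝ A := (Submodule.convex P).inter (normalCone_convex _ _)
      have h0A : (0 : EuclideanSpace ℝ (Fin n)) ∈ A := ⟨P.zero_mem, zero_mem_normalCone _ _⟩
      have hD : Module.finrank ℝ (Submodule.span ℝ A) = j - k := by
        rcases hgen s with h | h
        · exact absurd h hPC
        · rw [hAdef, h, hNC, hcF]
          omega
      obtain ⟨f₀, hf₀F, hf₀⟩ := exists_relint u s
      -- find a good w
      have hgood : ∃ w ∈ A, ∀ x ∈ coneOf u, ⟪w, x⟫ = 0 → x ∈ faceOf u s := by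
        by_contra hbad
        push_neg at hbad
        set T : Finset (Finset (Fin m)) := Finset.univ.filter
          (fun t => faceOf u s ⊆ faceOf u t ∧ ∃ x ∈ faceOf u t, x ∉ faceOf u s) with hTdef
        set S : Finset (Fin m) → Submodule ℝ (EuclideanSpace ℝ (Fin n)) := fun t =>
          Submodule.span ℝ ((P : Set (EuclideanSpace ℝ (Fin n)))
            ∩ normalCone (coneOf u) (faceOf u t)) with hSdef
        have hcov : A ⊆ ⋃ t ∈ T, (S t : Set (EuclideanSpace ℝ (Fin n))) := by
          intro w hw
          obtain ⟨x, hxV, hwx0, hxF⟩ := hbad w hw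
          set t := Finset.univ.filter (fun i => ⟪u i, x + f₀⟫ = 0) with htdef
          have hidx : ∀ i, i ∈ t ↔ (⟪u i, x⟫ = 0 ∧ ⟪u i, f₀⟫ = 0) := by
            intro i
            rw [htdef, Finset.mem_filter]
            constructor
            · rintro ⟨-, h⟩
              rw [inner_add_right] at h
              have h1 := hxV i
              have h2 := hf₀F.1 i
              constructor <;> linarith
            · rintro ⟨h1, h2⟩
              exact ⟨Finset.mem_univ i, by rw [inner_add_right, h1, h2, add_zero]⟩
          have hFt : faceOf u s ⊆ faceOf u t := by
            intro y hy
            refine ⟨hy.1, fun i hi => ?_⟩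
            rcases hf₀ i with h | h
            · exact h y hy
            · exfalso
              have := ((hidx i).mp hi).2
              linarith
          have hxt : x ∈ faceOf u t := ⟨hxV, fun i hi => ((hidx i).mp hi).1⟩
          have hpV : x + f₀ ∈ coneOf u := by
            intro i
            rw [inner_add_right]
            exact add_nonpos (hxV i) (hf₀F.1 i)
          have hwp : ⟪w, x + f₀⟫ = 0 := by
            rw [inner_add_right, hwx0, hw.2.2 f₀ hf₀F, add_zero]
          have hwt : w ∈ normalCone (coneOf u) (faceOf u t) := by
            refine ⟨hw.2.1, fun y hy => ?_⟩
            exact lemA hw.2.1 hpV hwp (htdef ▸ hy)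
          have htT : t ∈ T := by
            rw [hTdef, Finset.mem_filter]
            exact ⟨Finset.mem_univ t, hFt, x, hxt, hxF⟩
          exact Set.mem_biUnion htT (Submodule.subset_span ⟨hw.1, hwt⟩)
        obtain ⟨t, htT, hAt⟩ := convex_subset_submodule_of_cover hAconv ⟨0, h0A⟩ T S hcov
        have h1 : Submodule.span ℝ A ≤ S t := Submodule.span_le.mpr hAt
        obtain ⟨-, hFt, x, hxt, hxF⟩ := Finset.mem_filter.mp htT
        have hsub2 : normalCone (coneOf u) (faceOf u t) ⊆ C :=
          fun w' hw' => ⟨hw'.1, fun y hy => hw'.2 y (hFt hy)⟩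
        have hxV : x ∈ coneOf u := faceOf_subset hxt
        have hex_i0 : ∃ i₀ ∈ s, ⟪u i₀, x⟫ ≠ 0 := by
          by_contra h
          push_neg at h
          exact hxF ⟨hxV, fun i hi => h i hi⟩
        obtain ⟨i₀, hi₀s, hi₀ne⟩ := hex_i0
        have hi₀Z : i₀ ∈ Z := fun y hy => hy.2 i₀ hi₀s
        have hu₀U : u i₀ ∈ U := Submodule.subset_span ⟨i₀, hi₀Z, rfl⟩
        have hu₀notin : u i₀ ∉ Submodule.span ℝ (normalCone (coneOf u) (faceOf u t)) := by
          intro hmem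
          have hle : Submodule.span ℝ (normalCone (coneOf u) (faceOf u t))
              ≤ LinearMap.ker (innerSL ℝ x).toLinearMap := by
            rw [Submodule.span_le]
            intro w' hw'
            rw [SetLike.mem_coe, LinearMap.mem_ker, ContinuousLinearMap.coe_coe, innerSL_apply_apply]
            rw [real_inner_comm]
            exact hw'.2 x hxt
          have : ⟪x, u i₀⟫ = 0 := hle hmem
          rw [real_inner_comm] at this
          exact hi₀ne this
        have hle2 : Submodule.span ℝ (normalCone (coneOf u) (faceOf u t)) ≤ U := by
          rw [← hNC]
          exact Submodule.span_mono hsub2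
        have hlt : Submodule.span ℝ (normalCone (coneOf u) (faceOf u t)) < U :=
          lt_of_le_of_ne hle2 (fun hEq => hu₀notin (hEq ▸ hu₀U))
        have hct : Module.finrank ℝ (Submodule.span ℝ (normalCone (coneOf u) (faceOf u t)))
            < n - k := by
          have := Submodule.finrank_lt_finrank_of_lt hlt
          omega
        rcases hgen t with hz | hd2
        · have hSt : S t = ⊥ := by
            rw [hSdef]
            simp only [hz]
            exact Submodule.span_zero_singleton ℝ
          rw [hSt, le_bot_iff] at h1
          rw [h1, finrank_bot] at hD
          omega
        · have hmono : Module.finrank ℝ (Submodule.span ℝ A) ≤ Module.finrank ℝ (S t) :=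
            Submodule.finrank_mono h1
          have hSt : Module.finrank ℝ (S t)
              = j + Module.finrank ℝ (Submodule.span ℝ
                  (normalCone (coneOf u) (faceOf u t))) - n := by
            rw [hSdef]; exact hd2
          rw [hD, hSt] at hmono
          omega
      obtain ⟨w, hwA, hwgood⟩ := hgood
      obtain ⟨hwP, hwC⟩ := hwA
      -- exposedness
      have hexp : IsExposed ℝ (⇑πl '' coneOf u) (⇑πl '' faceOf u s) := by
        intro _
        refine ⟨innerSL ℝ w, ?_⟩
        ext y
        constructor
        · rintro ⟨x, hx, rfl⟩
          refine ⟨⟨x, faceOf_subset hx, rfl⟩, ?_⟩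
          rintro _ ⟨x', hx', rfl⟩
          simp only [innerSL_apply_apply]
          rw [hinner_proj w hwP x', hinner_proj w hwP x, hwC.2 x hx]
          exact hwC.1 x' hx'
        · rintro ⟨⟨x, hx, rfl⟩, hmax⟩
          have h0 := hmax 0 ⟨0, hzeroV, by simp⟩
          simp only [innerSL_apply_apply, inner_zero_right] at h0
          rw [hinner_proj w hwP x] at h0
          have : ⟪w, x⟫ = 0 := le_antisymm (hwC.1 x hx) h0
          exact ⟨x, hwgood x hx this, rfl⟩
      -- the span of A equals P ⊓ Wᗮ
      have hQ : (P ⊓ Wᗮ : Submodule ℝ (EuclideanSpace ℝ (Fin n))) = Submodule.span ℝ A := by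
        apply le_antisymm
        · rintro z hz
          obtain ⟨hzP, hzW⟩ := Submodule.mem_inf.mp hz
          -- Farkas representation of w
          obtain ⟨lam, hlam, hwsum⟩ := farkas_lemma u w (fun x hx => hwC.1 x hx)
          set t := Finset.univ.filter (fun i => 0 < lam i) with htdef
          have hface : faceOf u t = faceOf u s := by
            apply Set.Subset.antisymm
            · intro x hx
              have hxV : x ∈ coneOf u := faceOf_subset hx
              have hwx0 : ⟪w, x⟫ = 0 := by
                rw [hwsum, sum_inner]
                refine Finset.sum_eq_zero fun i _ => ?_
                rw [real_inner_smul_left]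
                by_cases hit : i ∈ t
                · rw [hx.2 i hit, mul_zero]
                · have h1 : ¬ 0 < lam i := fun hc =>
                    hit (Finset.mem_filter.mpr ⟨Finset.mem_univ i, hc⟩)
                  have : lam i = 0 := le_antisymm (not_lt.mp h1) (hlam i)
                  rw [this, zero_mul]
              exact hwgood x hxV hwx0
            · intro x hx
              refine ⟨hx.1, fun i hi => ?_⟩
              have hw0 : ⟪w, x⟫ = 0 := hwC.2 x hx
              rw [hwsum, sum_inner] at hw0
              simp_rw [real_inner_smul_left] at hw0
              have hterm : ∀ i' ∈ Finset.univ, lam i' * ⟪u i', x⟫ ≤ 0 := fun i' _ =>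
                mul_nonpos_of_nonneg_of_nonpos (hlam i') (hx.1 i')
              have hzero := (Finset.sum_eq_zero_iff_of_nonpos hterm).mp hw0 i (Finset.mem_univ i)
              have hlt : 0 < lam i := (Finset.mem_filter.mp hi).2
              rcases mul_eq_zero.mp hzero with h | h
              · exact absurd h (ne_of_gt hlt)
              · exact h
          have hzF : ∀ x ∈ faceOf u t, ⟪z, x⟫ ≤ 0 := by
            intro x hx
            rw [hface] at hx
            have : ⟪x, z⟫ = 0 :=
              (Submodule.mem_orthogonal W z).mp hzW x (Submodule.subset_span hx)
            rw [real_inner_comm] at this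
            exact le_of_eq this
          obtain ⟨a, b, ha, hb, hzsum⟩ := farkasFace u t z hzF
          have hεex : ∃ ε : ℝ, 0 < ε ∧ ∀ i, 0 ≤ lam i + ε * (a i - b i) := by
            rcases t.eq_empty_or_nonempty with hte | htne
            · refine ⟨1, one_pos, fun i => ?_⟩
              have hit : i ∉ t := hte ▸ Finset.notMem_empty i
              rw [hb i hit, sub_zero, one_mul]
              exact add_nonneg (hlam i) (ha i)
            · obtain ⟨i₁, hi₁, hmin⟩ :=
                t.exists_min_image (fun i => lam i / (|a i - b i| + 1)) htne
              have habs1 : (0:ℝ) < |a i₁ - b i₁| + 1 := by positivity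
              have hεpos : 0 < lam i₁ / (|a i₁ - b i₁| + 1) :=
                div_pos (Finset.mem_filter.mp hi₁).2 habs1
              refine ⟨_, hεpos, fun i => ?_⟩
              by_cases hit : i ∈ t
              · have h1 := hmin i hit
                have h2 : (0:ℝ) < |a i - b i| + 1 := by positivity
                rw [le_div_iff₀ h2] at h1
                have h3 : lam i₁ / (|a i₁ - b i₁| + 1) * (-(|a i - b i|))
                    ≤ lam i₁ / (|a i₁ - b i₁| + 1) * (a i - b i) :=
                  mul_le_mul_of_nonneg_left (neg_abs_le _) hεpos.le
                nlinarith [abs_nonneg (a i - b i)]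
              · rw [hb i hit, sub_zero]
                exact add_nonneg (hlam i) (mul_nonneg hεpos.le (ha i))
          obtain ⟨ε, hε, hcoef⟩ := hεex
          have hzWF : ∀ y ∈ faceOf u s, ⟪z, y⟫ = 0 := by
            intro y hy
            have : ⟪y, z⟫ = 0 :=
              (Submodule.mem_orthogonal W z).mp hzW y (Submodule.subset_span hy)
            rw [real_inner_comm] at this
            exact this
          have hwz : w + ε • z ∈ A := by
            refine ⟨P.add_mem hwP (P.smul_mem ε hzP), ?_, ?_⟩
            · intro x hx
              have hrep : w + ε • z = ∑ i, (lam i + ε * (a i - b i)) • u i := by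
                rw [hwsum, hzsum, Finset.smul_sum, ← Finset.sum_add_distrib]
                refine Finset.sum_congr rfl fun i _ => ?_
                rw [smul_smul, ← add_smul]
              rw [hrep]
              exact inner_sum_nonpos u _ hcoef x (fun i => hx i)
            · intro y hy
              rw [inner_add_left, real_inner_smul_left, hwC.2 y hy, hzWF y hy]
              ring
          have h1 : w ∈ Submodule.span ℝ A := Submodule.subset_span ⟨hwP, hwC⟩
          have h2 : w + ε • z ∈ Submodule.span ℝ A := Submodule.subset_span hwz
          have h3 : ε • z ∈ Submodule.span ℝ A := by
            have := Submodule.sub_mem _ h2 h1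
            simpa using this
          have := Submodule.smul_mem _ ε⁻¹ h3
          rwa [inv_smul_smul₀ (ne_of_gt hε)] at this
        · rw [Submodule.span_le]
          rintro a ⟨haP, haC⟩
          exact ⟨haP, hCWperp a haC⟩
      have hdim2 : Module.finrank ℝ (P ⊓ Wᗮ : Submodule ℝ (EuclideanSpace ℝ (Fin n)))
          = j - k := by rw [hQ, hD]
      have hsupdim := Submodule.finrank_sup_add_finrank_inf_eq P Wᗮ
      have hsuple : Module.finrank ℝ (P ⊔ Wᗮ : Submodule ℝ (EuclideanSpace ℝ (Fin n))) ≤ n := by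
        have := Submodule.finrank_le (P ⊔ Wᗮ : Submodule ℝ (EuclideanSpace ℝ (Fin n)))
        omega
      have hjn : j ≤ n := by
        have := Submodule.finrank_le P
        omega
      have hsup : (P ⊔ Wᗮ : Submodule ℝ (EuclideanSpace ℝ (Fin n))) = ⊤ := by
        apply Submodule.eq_top_of_finrank_eq
        rw [hdim2, hPdim, hWperp] at hsupdim
        rw [hnE]
        omega
      have hWPbot : W ⊓ LinearMap.ker πl = ⊥ := by
        have hker : LinearMap.ker πl = Pᗮ := by
          ext x
          rw [LinearMap.mem_ker]
          constructor
          · intro hx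
            have : P.orthogonalProjectionOnto x = 0 := by
              apply Subtype.ext
              simpa [hπl] using hx
            exact Submodule.orthogonalProjectionOnto_eq_zero_iff.mp this
          · intro hx
            have : P.orthogonalProjectionOnto x = 0 := Submodule.orthogonalProjectionOnto_eq_zero_iff.mpr hx
            simp [hπl, this]
        rw [hker, Submodule.eq_bot_iff]
        rintro z hz
        obtain ⟨hzW, hzP⟩ := Submodule.mem_inf.mp hz
        have hzz : ⟪z, z⟫ = 0 := by
          have hztop : z ∈ (P ⊔ Wᗮ : Submodule ℝ (EuclideanSpace ℝ (Fin n))) := by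
            rw [hsup]; exact Submodule.mem_top
          obtain ⟨p, hp, q, hq, hpq⟩ := Submodule.mem_sup.mp hztop
          have e1 : ⟪z, p⟫ = 0 := by
            rw [real_inner_comm]
            exact (Submodule.mem_orthogonal P z).mp hzP p hp
          have e2 : ⟪z, q⟫ = 0 := (Submodule.mem_orthogonal W q).mp hq z hzW
          have e3 : ⟪z, z⟫ = ⟪z, p + q⟫ := by rw [hpq]
          rw [e3, inner_add_right, e1, e2, add_zero]
        exact inner_self_eq_zero.mp hzz
      have hgoal2 : sdim (⇑πl '' faceOf u s) = k := by
        show Module.finrank ℝ (Submodule.span ℝ (⇑πl '' faceOf u s)) = k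
        rw [Submodule.span_image]
        rw [finrank_map_of_disjoint πl W hWPbot]
        exact hk'
      exact ⟨hexp, hgoal2⟩
  · -- part B
    intro _
    ext w
    constructor
    · rintro ⟨hwP, h1, h2⟩
      refine ⟨hwP, fun x hx => ?_, fun x hx => ?_⟩
      · rw [← hinner_proj w hwP x]; exact h1 _ ⟨x, hx, rfl⟩
      · rw [← hinner_proj w hwP x]; exact h2 _ ⟨x, hx, rfl⟩
    · rintro ⟨hwP, h1, h2⟩
      refine ⟨hwP, ?_, ?_⟩
      · rintro _ ⟨x, hx, rfl⟩
        rw [hinner_proj w hwP x]; exact h1 x hx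
      · rintro _ ⟨x, hx, rfl⟩
        rw [hinner_proj w hwP x]; exact h2 x hx
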